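/- Let T be a set of vectors in ℝ^m containing the origin, let ε_1,…,ε_m be i.i.d. Rademacher variables, and let σ : ℝ → ℝ be L-Lipschitz with σ(0)=0. Then E_ε[ sup_{t∈T} (∑_{i=1}^m ε_i σ(t_i))² ] ≤ 2L² · E_ε[ (sup_{t∈T} ∑_{i=1}^m ε_i t_i)² ]. -/

import Mathlib

open Finset Function

namespace Stmt8Aux

variable {m : ℕ}

/-- sign vector -/
noncomputable def sg (ε : Fin m → Bool) : Fin m → ℝ := fun i => if ε i then 1 else -1

/-- the basic sum -/
noncomputable def Ssum (ψ : Fin m → ℝ → ℝ) (ε : Fin m → Bool) (t : Fin m → ℝ) : ℝ :=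
  ∑ i, sg ε i * ψ i (t i)

/-- sup over T -/
noncomputable def Sup (T : Set (Fin m → ℝ)) (ψ : Fin m → ℝ → ℝ) (ε : Fin m → Bool) : ℝ :=
  ⨆ t : T, Ssum ψ ε t.1

/-- coordinatewise L-Lipschitz, vanishing at 0 -/
def Good (L : ℝ) (ψ : Fin m → ℝ → ℝ) : Prop :=
  ∀ i, (∀ a b, |ψ i a - ψ i b| ≤ L * |a - b|) ∧ ψ i 0 = 0

lemma sq_maj {x y a b : ℝ} (hx : 0 ≤ x) (hy : 0 ≤ y) (hs : x + y ≤ a + b)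
    (hxm : x ≤ max a b) (hym : y ≤ max a b) : x ^ 2 + y ^ 2 ≤ a ^ 2 + b ^ 2 := by
  rcases le_total a b with h | h
  · rw [max_eq_right h] at hxm hym
    rcases le_total (x + y) b with h2 | h2
    · nlinarith
    · nlinarith [mul_nonneg (sub_nonneg.2 hxm) (sub_nonneg.2 hym),
        mul_nonneg (sub_nonneg.2 hs) (sub_nonneg.2 h2), sq_nonneg (a + b - x - y)]
  · rw [max_eq_left h] at hxm hym
    rcases le_total (x + y) a with h2 | h2
    · nlinarith
    · nlinarith [mul_nonneg (sub_nonneg.2 hxm) (sub_nonneg.2 hym),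
        mul_nonneg (sub_nonneg.2 hs) (sub_nonneg.2 h2), sq_nonneg (a + b - x - y)]

lemma abs_sg (ε : Fin m → Bool) (i : Fin m) : |sg ε i| = 1 := by
  rcases Bool.eq_false_or_eq_true (ε i) with h | h <;> simp [sg, h]

lemma abs_Good {L : ℝ} {ψ : Fin m → ℝ → ℝ} (hψ : Good L ψ) (i : Fin m) (x : ℝ) :
    |ψ i x| ≤ L * |x| := by
  have := (hψ i).1 x 0
  simpa [(hψ i).2] using this

lemma Ssum_bound {L C : ℝ} {ψ : Fin m → ℝ → ℝ} (hψ : Good L ψ)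
    (ε : Fin m → Bool) {t : Fin m → ℝ} (ht : ∀ i, |t i| ≤ C) (hL : 0 ≤ L) :
    |Ssum ψ ε t| ≤ m * (L * C) := by
  calc |Ssum ψ ε t| ≤ ∑ i, |sg ε i * ψ i (t i)| := Finset.abs_sum_le_sum_abs _ _
    _ ≤ ∑ _i : Fin m, L * C := by
        refine Finset.sum_le_sum fun i _ => ?_
        rw [abs_mul, abs_sg, one_mul]
        exact (abs_Good hψ i (t i)).trans (mul_le_mul_of_nonneg_left (ht i) hL)
    _ = m * (L * C) := by simp [mul_comm]

lemma bddAbove_Ssum {T : Set (Fin m → ℝ)} {L C : ℝ} {ψ : Fin m → ℝ → ℝ}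
    (hψ : Good L ψ) (hC : ∀ t ∈ T, ∀ i, |t i| ≤ C) (hL : 0 ≤ L) (ε : Fin m → Bool) :
    BddAbove (Set.range fun t : T => Ssum ψ ε t.1) := by
  refine ⟨m * (L * C), ?_⟩
  rintro x ⟨t, rfl⟩
  exact (abs_le.1 (Ssum_bound hψ ε (hC t.1 t.2) hL)).2

lemma Ssum_zero {L : ℝ} {ψ : Fin m → ℝ → ℝ} (hψ : Good L ψ) (ε : Fin m → Bool) :
    Ssum ψ ε 0 = 0 := by
  simp [Ssum, (fun i => (hψ i).2 : ∀ i, ψ i 0 = 0)]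

lemma Sup_nonneg {T : Set (Fin m → ℝ)} (hT0 : (0 : Fin m → ℝ) ∈ T) {L C : ℝ}
    {ψ : Fin m → ℝ → ℝ} (hψ : Good L ψ) (hC : ∀ t ∈ T, ∀ i, |t i| ≤ C) (hL : 0 ≤ L)
    (ε : Fin m → Bool) : 0 ≤ Sup T ψ ε := by
  have := le_ciSup (bddAbove_Ssum hψ hC hL ε) (⟨0, hT0⟩ : T)
  rwa [Ssum_zero hψ] at this

lemma Ssum_update (ψ : Fin m → ℝ → ℝ) (ε : Fin m → Bool) (k : Fin m) (b : Bool)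
    (t : Fin m → ℝ) :
    Ssum ψ (update ε k b) t
      = (if b then (1:ℝ) else -1) * ψ k (t k) + ∑ i ∈ univ.erase k, sg ε i * ψ i (t i) := by
  rw [Ssum, ← Finset.add_sum_erase _ _ (mem_univ k)]
  congr 1
  · simp [sg]
  · refine Finset.sum_congr rfl fun i hi => ?_
    have : i ≠ k := (Finset.mem_erase.1 hi).1
    simp [sg, update_of_ne this]

lemma step {T : Set (Fin m → ℝ)} (hT0 : (0 : Fin m → ℝ) ∈ T) {C L : ℝ}
    (hC : ∀ t ∈ T, ∀ i, |t i| ≤ C) (hL : 0 ≤ L) {ψ : Fin m → ℝ → ℝ} (hψ : Good L ψ)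
    (k : Fin m) (ε : Fin m → Bool) :
    (Sup T ψ (update ε k true)) ^ 2 + (Sup T ψ (update ε k false)) ^ 2
      ≤ (Sup T (update ψ k (fun x => L * x)) (update ε k true)) ^ 2
        + (Sup T (update ψ k (fun x => L * x)) (update ε k false)) ^ 2 := by
  set ψ' := update ψ k (fun x => L * x) with hψ'def
  have hψ' : Good L ψ' := by
    intro i
    rcases eq_or_ne i k with rfl | hik
    · rw [hψ'def, update_self]
      exact ⟨fun a b => by rw [← mul_sub, abs_mul, abs_of_nonneg hL], by simp⟩
    · rw [hψ'def, update_of_ne hik]; exact hψ i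
  have hne : Nonempty T := ⟨⟨0, hT0⟩⟩
  set Mp := Sup T ψ' (update ε k true) with hMp
  set Mm := Sup T ψ' (update ε k false) with hMm
  have key : ∀ (t : T) (b : Bool), Ssum ψ' (update ε k b) t.1
      = (if b then (1:ℝ) else -1) * (L * t.1 k)
        + ∑ i ∈ univ.erase k, sg ε i * ψ i (t.1 i) := by
    intro t b
    rw [Ssum_update]
    congr 1
    · rw [hψ'def, update_self]
    · refine Finset.sum_congr rfl fun i hi => ?_
      rw [hψ'def, update_of_ne (Finset.mem_erase.1 hi).1]
  have keyO : ∀ (t : T) (b : Bool), Ssum ψ (update ε k b) t.1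
      = (if b then (1:ℝ) else -1) * ψ k (t.1 k)
        + ∑ i ∈ univ.erase k, sg ε i * ψ i (t.1 i) :=
    fun t b => Ssum_update ψ ε k b t.1
  have lMp : ∀ t : T, L * t.1 k + ∑ i ∈ univ.erase k, sg ε i * ψ i (t.1 i) ≤ Mp := by
    intro t
    have h := le_ciSup (bddAbove_Ssum hψ' hC hL (update ε k true)) t
    have h' : _ ≤ Mp := h
    rw [key t true] at h'; simp only [↓reduceIte, one_mul] at h'; linarith [h']
  have lMm : ∀ t : T, -(L * t.1 k) + ∑ i ∈ univ.erase k, sg ε i * ψ i (t.1 i) ≤ Mm := by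
    intro t
    have h := le_ciSup (bddAbove_Ssum hψ' hC hL (update ε k false)) t
    have h' : _ ≤ Mm := h
    rw [key t false] at h'; simp only [Bool.false_eq_true, ↓reduceIte, neg_one_mul] at h'; linarith [h']
  have habs : ∀ (t : T) (c : ℝ), |c| ≤ L * |t.1 k| →
      c + ∑ i ∈ univ.erase k, sg ε i * ψ i (t.1 i) ≤ max Mp Mm := by
    intro t c hc
    rcases le_total 0 (t.1 k) with hk | hk
    · rw [abs_of_nonneg hk] at hc
      have := (le_abs_self c).trans hc
      exact le_trans (by linarith [lMp t]) (le_max_left _ _)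
    · rw [abs_of_nonpos hk] at hc
      have := (le_abs_self c).trans hc
      exact le_trans (by linarith [lMm t]) (le_max_right _ _)
  have hmax1 : Sup T ψ (update ε k true) ≤ max Mp Mm := by
    refine ciSup_le fun t => ?_
    rw [keyO t true]
    refine habs t _ ?_
    simpa using abs_Good hψ k (t.1 k)
  have hmax2 : Sup T ψ (update ε k false) ≤ max Mp Mm := by
    refine ciSup_le fun t => ?_
    rw [keyO t false]
    refine habs t _ ?_
    simp only [Bool.false_eq_true, if_false, neg_one_mul, abs_neg]
    exact abs_Good hψ k (t.1 k)
  have pair : ∀ t s : T, Ssum ψ (update ε k true) t.1 + Ssum ψ (update ε k false) s.1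
      ≤ Mp + Mm := by
    intro t s
    rw [keyO t true, keyO s false]
    simp only [if_true, Bool.false_eq_true, if_false, one_mul, neg_one_mul]
    rcases le_total (s.1 k) (t.1 k) with h | h
    · have hlip : ψ k (t.1 k) - ψ k (s.1 k) ≤ L * (t.1 k - s.1 k) := by
        have h1 := (le_abs_self _).trans ((hψ k).1 (t.1 k) (s.1 k))
        rwa [abs_of_nonneg (sub_nonneg.2 h)] at h1
      linarith [lMp t, lMm s]
    · have hlip : ψ k (t.1 k) - ψ k (s.1 k) ≤ L * (s.1 k - t.1 k) := by
        have h1 := (le_abs_self _).trans ((hψ k).1 (t.1 k) (s.1 k))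
        rw [abs_sub_comm, abs_of_nonneg (sub_nonneg.2 h)] at h1
        exact h1
      linarith [lMm t, lMp s]
  have hsum : Sup T ψ (update ε k true) + Sup T ψ (update ε k false) ≤ Mp + Mm := by
    have h1 : Sup T ψ (update ε k true) ≤ (Mp + Mm) - Sup T ψ (update ε k false) := by
      refine ciSup_le fun t => ?_
      rw [le_sub_iff_add_le]
      have h2 : Sup T ψ (update ε k false) ≤ (Mp + Mm) - Ssum ψ (update ε k true) t.1 := by
        refine ciSup_le fun s => ?_
        rw [le_sub_iff_add_le, add_comm]
        exact pair t s
      linarith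
    linarith
  exact sq_maj (Sup_nonneg hT0 hψ hC hL _) (Sup_nonneg hT0 hψ hC hL _) hsum hmax1 hmax2

lemma sum_pair (f : (Fin m → Bool) → ℝ) (k : Fin m) :
    ∑ ε : Fin m → Bool, (f (update ε k true) + f (update ε k false))
      = 2 * ∑ ε : Fin m → Bool, f ε := by
  have hinv : Function.Involutive (fun ε : Fin m → Bool => update ε k (!ε k)) := by
    intro ε
    funext i
    rcases eq_or_ne i k with rfl | hik
    · simp
    · simp [update_of_ne hik]
  have h1 : ∑ ε : Fin m → Bool, f (update ε k (!ε k)) = ∑ ε : Fin m → Bool, f ε :=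
    Equiv.sum_comp hinv.toPerm f
  calc ∑ ε : Fin m → Bool, (f (update ε k true) + f (update ε k false))
      = ∑ ε : Fin m → Bool, (f (update ε k (ε k)) + f (update ε k (!ε k))) := by
        refine Finset.sum_congr rfl fun ε _ => ?_
        rcases Bool.eq_false_or_eq_true (ε k) with h | h <;> simp [h, add_comm]
    _ = ∑ ε : Fin m → Bool, f ε + ∑ ε : Fin m → Bool, f (update ε k (!ε k)) := by
        rw [Finset.sum_add_distrib]
        congr 1
        exact Finset.sum_congr rfl fun ε _ => by rw [Function.update_eq_self]
    _ = 2 * ∑ ε : Fin m → Bool, f ε := by rw [h1]; ring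

lemma Estep {T : Set (Fin m → ℝ)} (hT0 : (0 : Fin m → ℝ) ∈ T) {C L : ℝ}
    (hC : ∀ t ∈ T, ∀ i, |t i| ≤ C) (hL : 0 ≤ L) {ψ : Fin m → ℝ → ℝ} (hψ : Good L ψ)
    (k : Fin m) :
    ∑ ε : Fin m → Bool, (Sup T ψ ε) ^ 2
      ≤ ∑ ε : Fin m → Bool, (Sup T (update ψ k (fun x => L * x)) ε) ^ 2 := by
  have h1 := sum_pair (fun ε => (Sup T ψ ε) ^ 2) k
  have h2 := sum_pair (fun ε => (Sup T (update ψ k (fun x => L * x)) ε) ^ 2) k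
  have h3 : ∑ ε : Fin m → Bool,
        ((Sup T ψ (update ε k true)) ^ 2 + (Sup T ψ (update ε k false)) ^ 2)
      ≤ ∑ ε : Fin m → Bool,
        ((Sup T (update ψ k (fun x => L * x)) (update ε k true)) ^ 2
          + (Sup T (update ψ k (fun x => L * x)) (update ε k false)) ^ 2) :=
    Finset.sum_le_sum fun ε _ => step hT0 hC hL hψ k ε
  linarith

lemma Esteps {T : Set (Fin m → ℝ)} (hT0 : (0 : Fin m → ℝ) ∈ T) {C L : ℝ}
    (hC : ∀ t ∈ T, ∀ i, |t i| ≤ C) (hL : 0 ≤ L) {ψ : Fin m → ℝ → ℝ} (hψ : Good L ψ) :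
    ∑ ε : Fin m → Bool, (Sup T ψ ε) ^ 2
      ≤ ∑ ε : Fin m → Bool, (Sup T (fun _ x => L * x) ε) ^ 2 := by
  classical
  have goodLid : ∀ a b : ℝ, |L * a - L * b| ≤ L * |a - b| := fun a b => by
    rw [← mul_sub, abs_mul, abs_of_nonneg hL]
  have main : ∀ s : Finset (Fin m),
      ∑ ε : Fin m → Bool, (Sup T ψ ε) ^ 2
        ≤ ∑ ε : Fin m → Bool,
            (Sup T (fun i => if i ∈ s then (fun x => L * x) else ψ i) ε) ^ 2 := by
    intro s
    induction s using Finset.induction_on with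
    | empty => simp
    | @insert a s ha ih =>
        have hGs : Good L (fun i => if i ∈ s then (fun x => L * x) else ψ i) := by
          intro i
          by_cases h : i ∈ s
          · simp only [h, if_true]
            exact ⟨goodLid, by simp⟩
          · simp only [h, if_false]
            exact hψ i
        have heq : (fun i => if i ∈ insert a s then (fun x => L * x) else ψ i)
            = update (fun i => if i ∈ s then (fun x => L * x) else ψ i) a
                (fun x => L * x) := by
          funext i
          rcases eq_or_ne i a with rfl | hi
          · simp
          · simp [update_of_ne hi, Finset.mem_insert, hi]
        rw [heq]
        exact ih.trans (Estep hT0 hC hL hGs a)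
  have h := main Finset.univ
  simpa using h

lemma Ssum_not (ψ : Fin m → ℝ → ℝ) (ε : Fin m → Bool) (t : Fin m → ℝ) :
    Ssum ψ (fun i => !ε i) t = -Ssum ψ ε t := by
  rw [Ssum, Ssum, ← Finset.sum_neg_distrib]
  refine Finset.sum_congr rfl fun i _ => ?_
  rcases Bool.eq_false_or_eq_true (ε i) with h | h <;> simp [sg, h]

lemma sum_not (f : (Fin m → Bool) → ℝ) :
    ∑ ε : Fin m → Bool, f (fun i => !ε i) = ∑ ε : Fin m → Bool, f ε := by
  have hinv : Function.Involutive (fun ε : Fin m → Bool => fun i => !ε i) := by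
    intro ε; funext i; simp
  exact Equiv.sum_comp hinv.toPerm f

lemma Sup_smul {T : Set (Fin m → ℝ)} {L : ℝ} (hL : 0 ≤ L) (ε : Fin m → Bool) :
    Sup T (fun _ x => L * x) ε = L * Sup T (fun _ x => x) ε := by
  rw [Sup, Sup, Real.mul_iSup_of_nonneg hL]
  refine iSup_congr fun t => ?_
  rw [Ssum, Ssum, Finset.mul_sum]
  exact Finset.sum_congr rfl fun i _ => by ring

end Stmt8Aux

/-- Expectation over i.i.d. uniform `{-1,+1}` signs `ε : Fin m → ℝ`. -/
noncomputable def rademacherExp (m : ℕ) (f : (Fin m → ℝ) → ℝ) : ℝ :=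
  (∑ ε : Fin m → Bool, f (fun i => if ε i then 1 else -1)) / 2 ^ m

/-- Squared contraction inequality: for a (bounded) set `T ∋ 0` and `L`-Lipschitz `σ`
with `σ(0)=0`, `E_ε sup_{t∈T} (∑_i ε_i σ(t_i))² ≤ 2L² E_ε (sup_{t∈T} ∑_i ε_i t_i)²`. -/
theorem stmt8 (m : ℕ) (T : Set (Fin m → ℝ)) (hT0 : (0 : Fin m → ℝ) ∈ T)
    (hTb : Bornology.IsBounded T) (L : ℝ) (σ : ℝ → ℝ)
    (hσ : ∀ a b : ℝ, |σ a - σ b| ≤ L * |a - b|) (hσ0 : σ 0 = 0) :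
    rademacherExp m (fun ε => ⨆ t : T, (∑ i, ε i * σ (t.1 i)) ^ 2)
      ≤ 2 * L ^ 2 * rademacherExp m (fun ε => (⨆ t : T, ∑ i, ε i * t.1 i) ^ 2) := by
  classical
  open Stmt8Aux in
  have hL'0 : (0:ℝ) ≤ |L| := abs_nonneg L
  have hψ : Stmt8Aux.Good (m := m) |L| (fun _ => σ) := fun _ =>
    ⟨fun a b => (hσ a b).trans (mul_le_mul_of_nonneg_right (le_abs_self L) (abs_nonneg _)),
      hσ0⟩
  obtain ⟨C, hCn⟩ := hTb.exists_norm_le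
  have hC : ∀ t ∈ T, ∀ i, |t i| ≤ C := by
    intro t ht i
    have h1 := norm_le_pi_norm t i
    rw [Real.norm_eq_abs] at h1
    exact h1.trans (hCn t ht)
  have hne : Nonempty T := ⟨⟨0, hT0⟩⟩
  set ψσ : Fin m → ℝ → ℝ := fun _ => σ with hψσ
  set ψid : Fin m → ℝ → ℝ := fun _ x => x with hψid
  have hid : Stmt8Aux.Good (m := m) 1 ψid := fun _ => ⟨fun a b => by simp [hψid], rfl⟩
  have key : ∑ ε : Fin m → Bool, (⨆ t : T, (Stmt8Aux.Ssum ψσ ε t.1) ^ 2)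
      ≤ 2 * L ^ 2 * ∑ ε : Fin m → Bool, (Stmt8Aux.Sup T ψid ε) ^ 2 := by
    have A : ∀ ε : Fin m → Bool, (⨆ t : T, (Stmt8Aux.Ssum ψσ ε t.1) ^ 2)
        ≤ (Stmt8Aux.Sup T ψσ ε) ^ 2 + (Stmt8Aux.Sup T ψσ (fun i => !ε i)) ^ 2 := by
      intro ε
      refine ciSup_le fun t => ?_
      have h1 : Stmt8Aux.Ssum ψσ ε t.1 ≤ Stmt8Aux.Sup T ψσ ε :=
        le_ciSup (Stmt8Aux.bddAbove_Ssum hψ hC hL'0 ε) t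
      have h2 : -Stmt8Aux.Ssum ψσ ε t.1 ≤ Stmt8Aux.Sup T ψσ (fun i => !ε i) := by
        rw [← Stmt8Aux.Ssum_not]
        exact le_ciSup (Stmt8Aux.bddAbove_Ssum hψ hC hL'0 _) t
      have n1 := Stmt8Aux.Sup_nonneg hT0 hψ hC hL'0 ε
      have n2 := Stmt8Aux.Sup_nonneg hT0 hψ hC hL'0 (fun i => !ε i)
      rcases le_total 0 (Stmt8Aux.Ssum ψσ ε t.1) with h | h <;> nlinarith
    calc ∑ ε : Fin m → Bool, (⨆ t : T, (Stmt8Aux.Ssum ψσ ε t.1) ^ 2)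
        ≤ ∑ ε : Fin m → Bool,
            ((Stmt8Aux.Sup T ψσ ε) ^ 2 + (Stmt8Aux.Sup T ψσ (fun i => !ε i)) ^ 2) :=
          Finset.sum_le_sum fun ε _ => A ε
      _ = ∑ ε : Fin m → Bool, (Stmt8Aux.Sup T ψσ ε) ^ 2
            + ∑ ε : Fin m → Bool, (Stmt8Aux.Sup T ψσ (fun i => !ε i)) ^ 2 :=
          Finset.sum_add_distrib
      _ = 2 * ∑ ε : Fin m → Bool, (Stmt8Aux.Sup T ψσ ε) ^ 2 := by
          rw [Stmt8Aux.sum_not (fun ε => (Stmt8Aux.Sup T ψσ ε) ^ 2)]; ring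
      _ ≤ 2 * ∑ ε : Fin m → Bool, (Stmt8Aux.Sup T (fun _ x => |L| * x) ε) ^ 2 := by
          have := Stmt8Aux.Esteps hT0 hC hL'0 hψ
          linarith
      _ = 2 * L ^ 2 * ∑ ε : Fin m → Bool, (Stmt8Aux.Sup T ψid ε) ^ 2 := by
          have : ∀ ε : Fin m → Bool, (Stmt8Aux.Sup T (fun _ x => |L| * x) ε) ^ 2
              = L ^ 2 * (Stmt8Aux.Sup T ψid ε) ^ 2 := fun ε => by
            rw [Stmt8Aux.Sup_smul hL'0, mul_pow, sq_abs]
          rw [Finset.sum_congr rfl fun ε _ => this ε, ← Finset.mul_sum]; ring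
  show (∑ ε : Fin m → Bool, (⨆ t : T, (Stmt8Aux.Ssum ψσ ε t.1) ^ 2)) / 2 ^ m
      ≤ 2 * L ^ 2 * ((∑ ε : Fin m → Bool, (Stmt8Aux.Sup T ψid ε) ^ 2) / 2 ^ m)
  rw [← mul_div_assoc]
  have h2m : (0:ℝ) < 2 ^ m := by positivity
  exact (div_le_div_iff_of_pos_right h2m).2 key
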